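/- Let κ ≥ 0, T > 0, and suppose ψ(t,x) = A(t) x + ψ₀(t) solves ∂_t ψ(t,x) + κ x - H₀(∂²_{xx}ψ - R_A(∂_x ψ)²)(t,x) = 0 for all (t,x) ∈ [0,T) × ℝ with ψ(T,·) = 0, where H₀(γ) = (1/2)(c_β*(γ) - γ Σ*(γ) - γ (σ°)²). Then necessarily A(t) = κ(T - t) and ψ₀(t) = -∫_t^T H₀(-R_A κ² (T-s)²) ds; moreover γ⁰(t) := ∂²_{xx}ψ - R_A(∂_x ψ)² = -R_A κ²(T-t)². -/

import Mathlib

/-- If `ψ(t,x) = A(t)x + ψ₀(t)` solves `∂_t ψ + κ x - H₀(∂²_{xx}ψ - R_A(∂_x ψ)²) = 0`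
on `[0,T) × ℝ` with `ψ(T,·) = 0`, where `H₀(γ) = (1/2)(c_β*(γ) - γΣ*(γ) - γ(σ°)²)`,
then `A(t) = κ(T-t)`, `ψ₀(t) = -∫_t^T H₀(-R_A κ²(T-s)²) ds`, and
`γ⁰(t) = -R_A κ²(T-t)²`. -/
theorem stmt17 (κ T RA σ0 : ℝ) (hκ : 0 ≤ κ) (hT : 0 < T) (hRA : 0 < RA)
    (hσ : 0 ≤ σ0) (Sigs cβs H0 : ℝ → ℝ)
    (hH0def : ∀ γ : ℝ, H0 γ = 1 / 2 * (cβs γ - γ * Sigs γ - γ * σ0 ^ 2))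
    (hH0cont : Continuous H0)
    (A ψ0 A' ψ0' : ℝ → ℝ)
    (hAc : ContinuousOn A (Set.Icc 0 T)) (hψc : ContinuousOn ψ0 (Set.Icc 0 T))
    (hAd : ∀ t ∈ Set.Ico (0 : ℝ) T, HasDerivAt A (A' t) t)
    (hψd : ∀ t ∈ Set.Ico (0 : ℝ) T, HasDerivAt ψ0 (ψ0' t) t)
    (hpde : ∀ t ∈ Set.Ico (0 : ℝ) T, ∀ x : ℝ,
      A' t * x + ψ0' t + κ * x - H0 (-RA * (A t) ^ 2) = 0)
    (hAT : A T = 0) (hψT : ψ0 T = 0) :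
    ∀ t ∈ Set.Icc (0 : ℝ) T,
      A t = κ * (T - t) ∧
      ψ0 t = -∫ s in t..T, H0 (-RA * κ ^ 2 * (T - s) ^ 2) ∧
      -RA * (A t) ^ 2 = -RA * κ ^ 2 * (T - t) ^ 2 := by
  -- Extract A' = -κ and ψ0' t = H0(-RA A(t)²) on Ico
  have hA' : ∀ t ∈ Set.Ico (0 : ℝ) T, A' t = -κ := by
    intro t ht
    have h0 := hpde t ht 0
    have h1 := hpde t ht 1
    nlinarith [h0, h1]
  have hψ' : ∀ t ∈ Set.Ico (0 : ℝ) T, ψ0' t = H0 (-RA * (A t) ^ 2) := by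
    intro t ht
    have h0 := hpde t ht 0
    nlinarith [h0]
  -- A t = κ (T - t) on Icc
  have hAeq : ∀ t ∈ Set.Icc (0 : ℝ) T, A t = κ * (T - t) := by
    have const : ∀ t ∈ Set.Icc (0 : ℝ) T,
        (fun u => A u - κ * (T - u)) t = (fun u => A u - κ * (T - u)) 0 := by
      apply constant_of_has_deriv_right_zero
      · exact hAc.sub (Continuous.continuousOn (by continuity))
      · intro x hx
        have : HasDerivAt (fun u => A u - κ * (T - u)) (A' x - κ * (0 - 1)) x := by
          exact (hAd x hx).sub (((hasDerivAt_const x T).sub (hasDerivAt_id x)).const_mul κ)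
        rw [hA' x hx] at this
        have h0 : -κ - κ * (0 - 1) = 0 := by ring
        rw [h0] at this
        exact this.hasDerivWithinAt
    intro t ht
    have hTmem : T ∈ Set.Icc (0 : ℝ) T := ⟨le_of_lt hT, le_refl T⟩
    have hct := const t ht
    have hcT := const T hTmem
    simp only at hct hcT
    rw [hAT] at hcT
    have : A t - κ * (T - t) = 0 - κ * (T - T) := hct.trans hcT.symm
    linarith [this]
  -- the integrand
  set h : ℝ → ℝ := fun s => H0 (-RA * κ ^ 2 * (T - s) ^ 2) with hh
  have hhc : Continuous h := hH0cont.comp (by continuity)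
  have hint : ∀ t : ℝ, HasDerivAt (fun u => ∫ s in u..T, h s) (-(h t)) t := by
    intro t
    have h1 : HasDerivAt (fun u => ∫ s in T..u, h s) (h t) t :=
      intervalIntegral.integral_hasDerivAt_right (hhc.intervalIntegrable T t)
        (hhc.stronglyMeasurableAtFilter _ _) hhc.continuousAt
    have h2 : HasDerivAt (fun u => -∫ s in T..u, h s) (-(h t)) t := h1.neg
    have : (fun u => -∫ s in T..u, h s) = fun u => ∫ s in u..T, h s := by
      funext u; rw [intervalIntegral.integral_symm, neg_neg]
    rwa [this] at h2
  have hψeq : ∀ t ∈ Set.Icc (0 : ℝ) T, ψ0 t = -∫ s in t..T, h s := by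
    have const : ∀ t ∈ Set.Icc (0 : ℝ) T,
        (fun u => ψ0 u + ∫ s in u..T, h s) t = (fun u => ψ0 u + ∫ s in u..T, h s) 0 := by
      apply constant_of_has_deriv_right_zero
      · exact hψc.add (Continuous.continuousOn (continuous_iff_continuousAt.mpr
          fun x => (hint x).continuousAt))
      · intro x hx
        have hd : HasDerivAt (fun u => ψ0 u + ∫ s in u..T, h s) (ψ0' x + -(h x)) x :=
          (hψd x hx).add (hint x)
        have hx' : ψ0' x + -(h x) = 0 := by
          rw [hψ' x hx, hAeq x (Set.Ico_subset_Icc_self hx)]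
          simp only [hh]
          have : -RA * (κ * (T - x)) ^ 2 = -RA * κ ^ 2 * (T - x) ^ 2 := by ring
          rw [this]; ring
        rw [hx'] at hd
        exact hd.hasDerivWithinAt
    intro t ht
    have hTmem : T ∈ Set.Icc (0 : ℝ) T := ⟨le_of_lt hT, le_refl T⟩
    have hct := const t ht
    have hcT := const T hTmem
    simp only at hct hcT
    rw [hψT, intervalIntegral.integral_same] at hcT
    have : ψ0 t + ∫ s in t..T, h s = 0 + 0 := hct.trans hcT.symm
    linarith [this]
  intro t ht
  refine ⟨hAeq t ht, hψeq t ht, ?_⟩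
  rw [hAeq t ht]; ring
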